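/- In the complementary-labels model with corruption probability α ∈ [0,1), letting κ_α = (m−1)/(α + (1−α)(m−1)), the Jensen–Shannon divergence satisfies d_JS(P, Q) ≤ κ_α · √(8 · d_JS(P̃, Q̃)). (Corollary 2, eq. (15).) -/

import Mathlib

open scoped BigOperators
open MeasureTheory

/-- `P` is a probability mass function on `Z`. -/
def IsPMF {Z : Type*} (P : Z → ℝ) : Prop :=
  (∀ z, 0 ≤ P z) ∧ Summable P ∧ ∑' z, P z = 1

/-- Kullback–Leibler divergence of probability mass functions. -/
noncomputable def klDiv {Z : Type*} (P M : Z → ℝ) : ℝ :=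
  ∑' z, P z * Real.log (P z / M z)

/-- Jensen–Shannon divergence of probability mass functions. -/
noncomputable def jsDiv {Z : Type*} (P Q : Z → ℝ) : ℝ :=
  (1 / 2) * klDiv P (fun z => (P z + Q z) / 2) +
    (1 / 2) * klDiv Q (fun z => (P z + Q z) / 2)

/-- The corrupted labeled distribution obtained by passing labels through the channel `C`:
`P̃(x,ỹ) = ∑ j, P(x,j) · C j ỹ`. -/
noncomputable def corrupt {X : Type*} {k : ℕ} (P : X × Fin k → ℝ)
    (C : Matrix (Fin k) (Fin k) ℝ) : X × Fin k → ℝ :=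
  fun z => ∑ j, P (z.1, j) * C j z.2

/-- Parameter vector of the complementary label `u_y = m + y`: mass `a/(m−1)` on every
class label other than `y`, zero elsewhere. -/
noncomputable def compAlpha (m : ℕ) (a : ℝ) (y : Fin m) : Fin (m + m) → ℝ :=
  fun j => if (j : ℕ) < m ∧ (j : ℕ) ≠ (y : ℕ) then a / ((m : ℝ) - 1) else 0

/-- Confusion matrix of the complementary-labels model:
`C = diag(𝟙 − Σ_y α_{u_y}) + Σ_y α_{u_y} e_{m+y}^T`. -/
noncomputable def compConfusion (m : ℕ) (a : ℝ) :
    Matrix (Fin (m + m)) (Fin (m + m)) ℝ :=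
  Matrix.diagonal (fun i => 1 - ∑ y : Fin m, compAlpha m a y i) +
    ∑ y : Fin m, Matrix.vecMulVec (compAlpha m a y) (Pi.single (Fin.natAdd m y) 1)


section CompJSProof
open Real

lemma log_two_le_one : Real.log 2 ≤ 1 := by
  have := Real.log_le_sub_one_of_pos (by norm_num : (0:ℝ) < 2); linarith

lemma term_le (p q : ℝ) (hp : 0 ≤ p) (hq : 0 ≤ q) (hs : 0 < p + q) :
    p * Real.log (p / ((p + q) / 2)) ≤ p * (p - q) / (p + q) := by
  rcases eq_or_lt_of_le hp with h | h
  · simp [← h]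
  · have hm : 0 < (p + q) / 2 := by linarith
    have hx : 0 < p / ((p + q) / 2) := div_pos h hm
    have hlog := Real.log_le_sub_one_of_pos hx
    have he : p / ((p + q) / 2) - 1 = (p - q) / (p + q) := by
      field_simp; ring
    rw [he] at hlog
    calc p * Real.log (p / ((p + q) / 2)) ≤ p * ((p - q) / (p + q)) :=
          mul_le_mul_of_nonneg_left hlog hp
      _ = p * (p - q) / (p + q) := by ring

lemma kernel_upper (p q : ℝ) (hp : 0 ≤ p) (hq : 0 ≤ q) :
    p * Real.log (p / ((p + q) / 2)) + q * Real.log (q / ((p + q) / 2)) ≤ |p - q| := by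
  rcases eq_or_lt_of_le (add_nonneg hp hq) with h | h
  · have hp0 : p = 0 := by linarith
    have hq0 : q = 0 := by linarith
    simp [hp0, hq0]
  · have h1 := term_le p q hp hq h
    have h2 := term_le q p hq hp (by linarith)
    rw [add_comm q p] at h2
    have habs : |p - q| ≤ p + q := by
      rw [abs_le]; constructor <;> linarith
    have hsq : (p - q) ^ 2 / (p + q) ≤ |p - q| := by
      rw [div_le_iff₀ h]
      nlinarith [abs_nonneg (p - q), sq_abs (p - q)]
    have : p * (p - q) / (p + q) + q * (q - p) / (p + q) = (p - q) ^ 2 / (p + q) := by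
      field_simp; ring
    linarith

lemma abs_kl_term_le (p q : ℝ) (hp : 0 ≤ p) (hq : 0 ≤ q) :
    |p * Real.log (p / ((p + q) / 2))| ≤ p + q := by
  rcases eq_or_lt_of_le hp with h | h
  · simp [← h]; linarith
  · have hs : 0 < p + q := by linarith
    have hm : 0 < (p + q) / 2 := by linarith
    rw [abs_le]; constructor
    · -- lower:  p log(p/m) ≥ p - m
      have hx : 0 < ((p + q) / 2) / p := div_pos hm h
      have hlog := Real.log_le_sub_one_of_pos hx
      have : Real.log (((p + q) / 2) / p) = - Real.log (p / ((p + q) / 2)) := by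
        rw [← Real.log_inv]; congr 1; rw [inv_div]
      rw [this] at hlog
      have h2 : p * (-Real.log (p / ((p+q)/2))) ≤ p * (((p + q) / 2) / p - 1) :=
        mul_le_mul_of_nonneg_left hlog hp
      have h3 : p * (((p + q) / 2) / p - 1) = (q - p) / 2 := by field_simp; ring
      rw [h3] at h2
      nlinarith
    · have h1 := term_le p q hp hq hs
      have : p * (p - q) / (p + q) ≤ p + q := by
        rw [div_le_iff₀ hs]; nlinarith
      linarith

section PhiSection
open Set

noncomputable def Gf : ℝ → ℝ := fun u => Real.log (1 + u) - Real.log (1 - u) - 2 * u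
noncomputable def Ff : ℝ → ℝ := fun u =>
  (1 + u) * Real.log (1 + u) + (1 - u) * Real.log (1 - u) - u ^ 2

lemma hasDerivAt_G {x : ℝ} (h1 : -1 < x) (h2 : x < 1) :
    HasDerivAt Gf (1 / (1 + x) + 1 / (1 - x) - 2) x := by
  have ha : (1 : ℝ) + x ≠ 0 := by linarith
  have hb : (1 : ℝ) - x ≠ 0 := by linarith
  have d1 : HasDerivAt (fun y : ℝ => Real.log (1 + y)) (1 / (1 + x)) x := by
    have := (Real.hasDerivAt_log ha).comp x ((hasDerivAt_id x).const_add 1)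
    simpa [one_div, Function.comp_def] using this
  have d2 : HasDerivAt (fun y : ℝ => Real.log (1 - y)) (-(1 / (1 - x))) x := by
    have := (Real.hasDerivAt_log hb).comp x ((hasDerivAt_id x).const_sub 1)
    simpa [one_div, Function.comp_def] using this
  have d3 : HasDerivAt (fun y : ℝ => 2 * y) 2 x := by
    simpa using (hasDerivAt_id x).const_mul 2
  have := (d1.sub d2).sub d3
  refine this.congr_deriv ?_
  ring

lemma hasDerivAt_F {x : ℝ} (h1 : -1 < x) (h2 : x < 1) :
    HasDerivAt Ff (Gf x) x := by
  have ha : (1 : ℝ) + x ≠ 0 := by linarith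
  have hb : (1 : ℝ) - x ≠ 0 := by linarith
  have d1 : HasDerivAt (fun y : ℝ => Real.log (1 + y)) (1 / (1 + x)) x := by
    have := (Real.hasDerivAt_log ha).comp x ((hasDerivAt_id x).const_add 1)
    simpa [one_div, Function.comp_def] using this
  have d2 : HasDerivAt (fun y : ℝ => Real.log (1 - y)) (-(1 / (1 - x))) x := by
    have := (Real.hasDerivAt_log hb).comp x ((hasDerivAt_id x).const_sub 1)
    simpa [one_div, Function.comp_def] using this
  have e1 : HasDerivAt (fun y : ℝ => 1 + y) 1 x := (hasDerivAt_id x).const_add 1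
  have e2 : HasDerivAt (fun y : ℝ => 1 - y) (-1) x := by
    simpa using (hasDerivAt_id x).const_sub 1
  have e3 : HasDerivAt (fun y : ℝ => y ^ 2) (2 * x) x := by
    simpa using hasDerivAt_pow 2 x
  have m1 := e1.mul d1
  have m2 := e2.mul d2
  have := (m1.add m2).sub e3
  refine this.congr_deriv ?_
  unfold Gf
  field_simp
  ring

lemma G_nonneg {u : ℝ} (h0 : 0 ≤ u) (h1 : u < 1) : 0 ≤ Gf u := by
  rcases eq_or_lt_of_le h0 with h | h
  · simp [← h, Gf]
  · have hmono : MonotoneOn Gf (Icc 0 u) := by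
      apply monotoneOn_of_deriv_nonneg (convex_Icc 0 u)
      · intro x hx
        exact (hasDerivAt_G (by simp at hx; linarith [hx.1]) (by simp at hx; linarith [hx.2])).continuousAt.continuousWithinAt
      · intro x hx
        rw [interior_Icc] at hx
        exact (hasDerivAt_G (by linarith [hx.1]) (by linarith [hx.2])).differentiableAt.differentiableWithinAt
      · intro x hx
        rw [interior_Icc] at hx
        rw [(hasDerivAt_G (by linarith [hx.1]) (by linarith [hx.2])).deriv]
        have hx1 : 0 < 1 + x := by linarith [hx.1]
        have hx2 : 0 < 1 - x := by linarith [hx.2]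
        rw [sub_nonneg]
        rw [div_add_div _ _ (ne_of_gt hx1) (ne_of_gt hx2), le_div_iff₀ (by positivity)]
        nlinarith [hx.1, mul_pos hx1 hx2]
    have h00 : Gf 0 = 0 := by simp [Gf]
    have := hmono (left_mem_Icc.mpr (le_of_lt h)) (right_mem_Icc.mpr (le_of_lt h)) (le_of_lt h)
    linarith [h00 ▸ this]

lemma F_nonneg {u : ℝ} (h0 : 0 ≤ u) (h1 : u < 1) : 0 ≤ Ff u := by
  rcases eq_or_lt_of_le h0 with h | h
  · simp [← h, Ff]
  · have hmono : MonotoneOn Ff (Icc 0 u) := by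
      apply monotoneOn_of_deriv_nonneg (convex_Icc 0 u)
      · intro x hx
        simp only [mem_Icc] at hx
        exact (hasDerivAt_F (by linarith [hx.1]) (by linarith [hx.2])).continuousAt.continuousWithinAt
      · intro x hx
        rw [interior_Icc] at hx
        exact (hasDerivAt_F (by linarith [hx.1]) (by linarith [hx.2])).differentiableAt.differentiableWithinAt
      · intro x hx
        rw [interior_Icc] at hx
        rw [(hasDerivAt_F (by linarith [hx.1]) (by linarith [hx.2])).deriv]
        exact G_nonneg (le_of_lt hx.1) (by linarith [hx.2])
    have h00 : Ff 0 = 0 := by simp [Ff]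
    have := hmono (left_mem_Icc.mpr (le_of_lt h)) (right_mem_Icc.mpr (le_of_lt h)) (le_of_lt h)
    linarith [h00 ▸ this]

lemma phi_ge {u : ℝ} (h0 : 0 ≤ u) (h1 : u ≤ 1) :
    u ^ 2 ≤ (1 + u) * Real.log (1 + u) + (1 - u) * Real.log (1 - u) := by
  rcases eq_or_lt_of_le h1 with h | h
  · subst h
    simp only [one_pow]
    have := Real.log_two_gt_d9
    norm_num
    nlinarith [Real.log_two_gt_d9]
  · have := F_nonneg h0 h
    unfold Ff at this
    linarith

end PhiSection

lemma kernel_lower_aux (p q : ℝ) (hq : 0 ≤ q) (hpq : q ≤ p) (hs : 0 < p + q) :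
    (p - q) ^ 2 / (2 * (p + q)) ≤
      p * Real.log (p / ((p + q) / 2)) + q * Real.log (q / ((p + q) / 2)) := by
  set s := p + q with hsdef
  set u := (p - q) / s with hu
  have hu0 : 0 ≤ u := div_nonneg (by linarith) (le_of_lt hs)
  have hu1 : u ≤ 1 := by
    rw [hu, div_le_one hs]; linarith
  have hs' : p + q ≠ 0 := ne_of_gt hs
  have h1u : 1 + u = p / ((p + q) / 2) := by
    rw [hu, hsdef]; field_simp; ring
  have h2u : 1 - u = q / ((p + q) / 2) := by
    rw [hu, hsdef]; field_simp; ring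
  have hp' : p = s / 2 * (1 + u) := by
    rw [hu]; field_simp; ring
  have hq' : q = s / 2 * (1 - u) := by
    rw [hu]; field_simp; ring
  have key := phi_ge hu0 hu1
  have hs2 : 0 ≤ s / 2 := by linarith
  have hmul := mul_le_mul_of_nonneg_left key hs2
  have hL : (p - q) ^ 2 / (2 * (p + q)) = s / 2 * u ^ 2 := by
    rw [hu, hsdef]; field_simp
  have hR : p * Real.log (p / ((p + q) / 2)) + q * Real.log (q / ((p + q) / 2)) =
      s / 2 * ((1 + u) * Real.log (1 + u) + (1 - u) * Real.log (1 - u)) := by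
    rw [← h1u, ← h2u]
    rw [hp', hq']  -- rewrite all p and q occurrences (none remain in logs)
    ring
  rw [hL, hR]
  exact hmul

lemma kernel_lower (p q : ℝ) (hp : 0 ≤ p) (hq : 0 ≤ q) :
    (p - q) ^ 2 / (2 * (p + q)) ≤
      p * Real.log (p / ((p + q) / 2)) + q * Real.log (q / ((p + q) / 2)) := by
  rcases eq_or_lt_of_le (add_nonneg hp hq) with h | h
  · have hp0 : p = 0 := by linarith
    have hq0 : q = 0 := by linarith
    simp [hp0, hq0]
  · rcases le_total q p with hc | hc
    · exact kernel_lower_aux p q hq hc h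
    · have := kernel_lower_aux q p hp hc (by linarith)
      rw [add_comm q p] at this
      calc (p - q) ^ 2 / (2 * (p + q)) = (q - p) ^ 2 / (2 * (p + q)) := by ring_nf
        _ ≤ _ := by linarith

lemma key_aux {m : ℕ} (hm : 2 ≤ m) (d : Fin m → ℝ) (hS : 0 ≤ ∑ j, d j) :
    ∑ y, |d y| ≤ 2 * ∑ y, |(∑ j, d j) - d y| := by
  set S := ∑ j, d j with hSdef
  set A := ∑ y, |S - d y| with hA
  have hsum_sub : ∑ y : Fin m, (S - d y) = ((m : ℝ) - 1) * S := by
    rw [Finset.sum_sub_distrib]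
    simp only [Finset.sum_const, Finset.card_univ, Fintype.card_fin, nsmul_eq_mul, ← hSdef]
    ring
  have hi : ((m : ℝ) - 1) * S ≤ A := by
    calc ((m : ℝ) - 1) * S = ∑ y : Fin m, (S - d y) := hsum_sub.symm
      _ ≤ |∑ y : Fin m, (S - d y)| := le_abs_self _
      _ ≤ ∑ y : Fin m, |S - d y| := Finset.abs_sum_le_sum_abs _ _
  set c : Fin m → ℝ := fun y => max 0 (min (S - d y) S) with hc
  have hclaim_a : ∀ y, |d y| - |S - d y| ≤ S - 2 * c y := by
    intro y
    rcases le_or_gt (S - d y) 0 with h | h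
    · have hcy : c y = 0 := by
        simp only [hc]; rw [max_eq_left (min_le_of_left_le h)]
      have h2 : |d y| ≤ S + |S - d y| := by
        calc |d y| = |S - (S - d y)| := by ring_nf
          _ ≤ |S| + |S - d y| := abs_sub _ _
          _ = S + |S - d y| := by rw [abs_of_nonneg hS]
      rw [hcy]; linarith
    · rcases le_or_gt (S - d y) S with h2 | h2
      · have hcy : c y = S - d y := by
          simp only [hc]; rw [min_eq_left h2, max_eq_right (le_of_lt h)]
        have habs1 : |d y| = d y := abs_of_nonneg (by linarith)
        have habs2 : |S - d y| = S - d y := abs_of_nonneg (le_of_lt h)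
        rw [habs1, habs2, hcy]; linarith
      · have hcy : c y = S := by
          simp only [hc]; rw [min_eq_right (le_of_lt h2), max_eq_right hS]
        have habs1 : |d y| = -(d y) := abs_of_nonpos (by linarith)
        have habs2 : |S - d y| = S - d y := abs_of_nonneg (le_of_lt h)
        rw [habs1, habs2, hcy]; linarith
  have hclaim_b : S ≤ ∑ y, c y := by
    by_cases hex : ∃ y, d y ≤ 0
    · obtain ⟨y0, hy0⟩ := hex
      have hcy0 : c y0 = S := by
        simp only [hc]; rw [min_eq_right (by linarith), max_eq_right hS]
      have hnn : ∀ y ∈ Finset.univ, 0 ≤ c y := fun y _ => le_max_left _ _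
      calc S = c y0 := hcy0.symm
        _ ≤ ∑ y, c y := Finset.single_le_sum hnn (Finset.mem_univ y0)
    · push_neg at hex
      have herase : ∀ y : Fin m, ∑ j ∈ Finset.univ.erase y, d j = S - d y := by
        intro y
        have := Finset.sum_erase_add Finset.univ d (Finset.mem_univ y)
        rw [hSdef]; linarith
      have hcy : ∀ y, c y = S - d y := by
        intro y
        have h0 : 0 ≤ S - d y := by
          rw [← herase y]
          exact Finset.sum_nonneg fun j _ => le_of_lt (hex j)
        have h1 : S - d y ≤ S := by linarith [hex y]
        simp only [hc]; rw [min_eq_left h1, max_eq_right h0]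
      have : ∑ y, c y = ((m : ℝ) - 1) * S := by
        rw [show (∑ y, c y) = ∑ y : Fin m, (S - d y) from Finset.sum_congr rfl fun y _ => hcy y]
        exact hsum_sub
      rw [this]
      have hm' : (2 : ℝ) ≤ (m : ℝ) := by exact_mod_cast hm
      nlinarith
  have hii : ∑ y, |d y| ≤ A + ((m : ℝ) - 2) * S := by
    have h1 : ∑ y, (|d y| - |S - d y|) ≤ ∑ y, (S - 2 * c y) :=
      Finset.sum_le_sum fun y _ => hclaim_a y
    have h2 : ∑ y, (|d y| - |S - d y|) = (∑ y, |d y|) - A := by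
      rw [Finset.sum_sub_distrib]
    have h3 : ∑ y, (S - 2 * c y) = (m : ℝ) * S - 2 * ∑ y, c y := by
      rw [Finset.sum_sub_distrib, ← Finset.mul_sum]
      simp only [Finset.sum_const, Finset.card_univ, Fintype.card_fin, nsmul_eq_mul]
    rw [h2, h3] at h1
    nlinarith [hclaim_b]
  have hfin : ((m : ℝ) - 2) * S ≤ A := by
    nlinarith [mul_nonneg (sub_nonneg.mpr hS) hS]
  -- (m-2)S ≤ (m-1)S ≤ A since S ≥ 0
  linarith

lemma key_ineq {m : ℕ} (hm : 2 ≤ m) (d : Fin m → ℝ) :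
    ∑ y, |d y| ≤ 2 * ∑ y, |(∑ j, d j) - d y| := by
  rcases le_or_gt 0 (∑ j, d j) with h | h
  · exact key_aux hm d h
  · have := key_aux hm (fun y => -(d y)) (by simpa using le_of_lt (by linarith : (0:ℝ) < -∑ j, d j))
    simp only [Finset.sum_neg_distrib] at this
    have he : ∀ x : Fin m, |-∑ j, d j - -d x| = |(∑ j, d j) - d x| := by
      intro x; rw [← abs_neg]; ring_nf
    simp only [abs_neg, he] at this
    exact this


section MatrixLemmas
variable {m : ℕ} {a : ℝ}

lemma compAlpha_castAdd (y j : Fin m) :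
    compAlpha m a y (Fin.castAdd m j) = if j = y then 0 else a / ((m : ℝ) - 1) := by
  simp only [compAlpha, Fin.coe_castAdd]
  rcases eq_or_ne j y with h | h
  · simp [h, j.isLt]
  · have : (j : ℕ) ≠ (y : ℕ) := fun hc => h (Fin.ext hc)
    simp [this, j.isLt, h]

lemma sum_compAlpha_castAdd (hm : 2 ≤ m) (j : Fin m) :
    ∑ y : Fin m, compAlpha m a y (Fin.castAdd m j) = a := by
  have hm1 : ((m : ℝ) - 1) ≠ 0 := by
    have : (2 : ℝ) ≤ (m : ℝ) := by exact_mod_cast hm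
    linarith
  have : ∀ y : Fin m, compAlpha m a y (Fin.castAdd m j)
      = a / ((m : ℝ) - 1) - (if j = y then a / ((m : ℝ) - 1) else 0) := by
    intro y; rw [compAlpha_castAdd]; rcases eq_or_ne j y with h | h <;> simp [h]
  rw [Finset.sum_congr rfl fun y _ => this y, Finset.sum_sub_distrib]
  rw [Finset.sum_ite_eq Finset.univ j (fun _ => a / ((m : ℝ) - 1))]
  simp only [Finset.mem_univ, if_true, Finset.sum_const, Finset.card_univ, Fintype.card_fin,
    nsmul_eq_mul]
  field_simp

lemma castAdd_ne_natAdd (i : Fin m) (y : Fin m) : Fin.castAdd m i ≠ Fin.natAdd m y := by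
  intro h
  have := congrArg Fin.val h
  simp only [Fin.coe_castAdd, Fin.coe_natAdd] at this
  omega

lemma C_cast_cast (hm : 2 ≤ m) (j y : Fin m) :
    compConfusion m a (Fin.castAdd m j) (Fin.castAdd m y)
      = if j = y then 1 - a else 0 := by
  simp only [compConfusion, Matrix.add_apply, Matrix.sum_apply, Matrix.vecMulVec_apply,
    Pi.single_apply]
  have h2 : ∀ y' : Fin m, compAlpha m a y' (Fin.castAdd m j) *
      (if Fin.castAdd m y = Fin.natAdd m y' then (1:ℝ) else 0) = 0 := by
    intro y'
    rw [if_neg (castAdd_ne_natAdd y y')]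
    ring
  rw [Finset.sum_congr rfl fun y' _ => h2 y', Finset.sum_const_zero, add_zero]
  rcases eq_or_ne j y with h | h
  · subst h
    rw [Matrix.diagonal_apply_eq, sum_compAlpha_castAdd hm, if_pos rfl]
  · rw [Matrix.diagonal_apply_ne _ (fun hc => h (by
      have := congrArg Fin.val hc
      simp only [Fin.coe_castAdd] at this
      exact Fin.ext this)), if_neg h]

lemma C_cast_nat (j y : Fin m) :
    compConfusion m a (Fin.castAdd m j) (Fin.natAdd m y)
      = if j = y then 0 else a / ((m : ℝ) - 1) := by
  simp only [compConfusion, Matrix.add_apply, Matrix.sum_apply, Matrix.vecMulVec_apply,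
    Pi.single_apply]
  rw [Matrix.diagonal_apply_ne _ (castAdd_ne_natAdd j y)]
  have h2 : ∀ y' : Fin m, compAlpha m a y' (Fin.castAdd m j) *
      (if Fin.natAdd m y = Fin.natAdd m y' then (1:ℝ) else 0)
      = if y' = y then compAlpha m a y (Fin.castAdd m j) else 0 := by
    intro y'
    rcases eq_or_ne y' y with h | h
    · subst h; simp
    · rw [if_neg (fun hc : Fin.natAdd m y = Fin.natAdd m y' => h (by
        have := congrArg Fin.val hc
        simp only [Fin.coe_natAdd] at this
        exact (Fin.ext (by omega)).symm)), if_neg h]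
      ring
  rw [Finset.sum_congr rfl fun y' _ => h2 y',
    Finset.sum_ite_eq' Finset.univ y (fun _ => compAlpha m a y (Fin.castAdd m j))]
  simp only [Finset.mem_univ, if_true, zero_add]
  exact compAlpha_castAdd y j

variable {X : Type*}

lemma corrupt_castAdd (hm : 2 ≤ m) (P : X × Fin (m + m) → ℝ)
    (hPz : ∀ (x : X) (y : Fin (m + m)), m ≤ (y : ℕ) → P (x, y) = 0)
    (x : X) (y : Fin m) :
    corrupt P (compConfusion m a) (x, Fin.castAdd m y)
      = (1 - a) * P (x, Fin.castAdd m y) := by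
  unfold corrupt
  rw [Fin.sum_univ_add]
  have h2 : ∀ i : Fin m, P (x, Fin.natAdd m i) *
      compConfusion m a (Fin.natAdd m i) (Fin.castAdd m y) = 0 := by
    intro i
    rw [hPz x _ (by simp [Fin.coe_natAdd])]
    ring
  simp only [h2, Finset.sum_const_zero, add_zero]
  have h1 : ∀ i : Fin m, P (x, Fin.castAdd m i) *
      compConfusion m a (Fin.castAdd m i) (Fin.castAdd m y)
      = if i = y then (1 - a) * P (x, Fin.castAdd m y) else 0 := by
    intro i
    rw [C_cast_cast hm]
    rcases eq_or_ne i y with h | h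
    · subst h; simp [mul_comm]
    · simp [h]
  rw [Finset.sum_congr rfl fun i _ => h1 i,
    Finset.sum_ite_eq' Finset.univ y (fun _ => (1 - a) * P (x, Fin.castAdd m y))]
  simp

lemma corrupt_natAdd (hm : 2 ≤ m) (P : X × Fin (m + m) → ℝ)
    (hPz : ∀ (x : X) (y : Fin (m + m)), m ≤ (y : ℕ) → P (x, y) = 0)
    (x : X) (y : Fin m) :
    corrupt P (compConfusion m a) (x, Fin.natAdd m y)
      = a / ((m : ℝ) - 1) * ((∑ j : Fin m, P (x, Fin.castAdd m j)) - P (x, Fin.castAdd m y)) := by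
  unfold corrupt
  rw [Fin.sum_univ_add]
  have h2 : ∀ i : Fin m, P (x, Fin.natAdd m i) *
      compConfusion m a (Fin.natAdd m i) (Fin.natAdd m y) = 0 := by
    intro i
    rw [hPz x _ (by simp [Fin.coe_natAdd])]
    ring
  simp only [h2, Finset.sum_const_zero, add_zero]
  have h1 : ∀ i : Fin m, P (x, Fin.castAdd m i) *
      compConfusion m a (Fin.castAdd m i) (Fin.natAdd m y)
      = a / ((m : ℝ) - 1) * P (x, Fin.castAdd m i)
        - (if i = y then a / ((m : ℝ) - 1) * P (x, Fin.castAdd m i) else 0) := by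
    intro i
    rw [C_cast_nat]
    rcases eq_or_ne i y with h | h <;> simp [h] <;> ring
  rw [Finset.sum_congr rfl fun i _ => h1 i, Finset.sum_sub_distrib,
    Finset.sum_ite_eq' Finset.univ y (fun i => a / ((m : ℝ) - 1) * P (x, Fin.castAdd m i)),
    ← Finset.mul_sum]
  simp only [Finset.mem_univ, if_true]
  ring

end MatrixLemmas

section
variable {Z : Type*} (P Q : Z → ℝ)
  (hP0 : ∀ z, 0 ≤ P z) (hQ0 : ∀ z, 0 ≤ Q z) (hPs : Summable P) (hQs : Summable Q)

include hP0 hQ0 hPs hQs in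
lemma summable_kl1 : Summable (fun z => P z * Real.log (P z / ((P z + Q z) / 2))) := by
  apply Summable.of_norm_bounded (hPs.add hQs)
  intro z
  rw [Real.norm_eq_abs]
  exact abs_kl_term_le _ _ (hP0 z) (hQ0 z)

include hP0 hQ0 hPs hQs in
lemma summable_kl2 : Summable (fun z => Q z * Real.log (Q z / ((P z + Q z) / 2))) := by
  have := summable_kl1 Q P hQ0 hP0 hQs hPs
  simpa [add_comm] using this

include hP0 hQ0 hPs hQs in
lemma jsDiv_eq : jsDiv P Q = (1 / 2) * ∑' z,
    (P z * Real.log (P z / ((P z + Q z) / 2)) + Q z * Real.log (Q z / ((P z + Q z) / 2))) := by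
  rw [jsDiv, klDiv, klDiv,
    Summable.tsum_add (summable_kl1 P Q hP0 hQ0 hPs hQs) (summable_kl2 P Q hP0 hQ0 hPs hQs)]
  ring

include hP0 hQ0 hPs hQs in
lemma jsDiv_le_half : jsDiv P Q ≤ (1 / 2) * ∑' z, |P z - Q z| := by
  rw [jsDiv_eq P Q hP0 hQ0 hPs hQs]
  have h := Summable.tsum_le_tsum (fun z => kernel_upper (P z) (Q z) (hP0 z) (hQ0 z))
    ((summable_kl1 P Q hP0 hQ0 hPs hQs).add (summable_kl2 P Q hP0 hQ0 hPs hQs))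
    (hPs.sub hQs).abs
  linarith

include hP0 hQ0 hPs hQs in
lemma summable_quad : Summable (fun z => (P z - Q z) ^ 2 / (P z + Q z)) := by
  apply Summable.of_nonneg_of_le
    (fun z => div_nonneg (sq_nonneg _) (add_nonneg (hP0 z) (hQ0 z))) _ ((hPs.sub hQs).abs)
  intro z
  rcases eq_or_lt_of_le (add_nonneg (hP0 z) (hQ0 z)) with h | h
  · rw [← h, div_zero]; exact abs_nonneg _
  · rw [div_le_iff₀ h]
    have habs : |P z - Q z| ≤ P z + Q z := by
      rw [abs_le]; constructor <;> nlinarith [hP0 z, hQ0 z]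
    nlinarith [sq_abs (P z - Q z), abs_nonneg (P z - Q z)]

include hP0 hQ0 hPs hQs in
lemma quad_le_jsDiv : (1 / 4) * ∑' z, (P z - Q z) ^ 2 / (P z + Q z) ≤ jsDiv P Q := by
  rw [jsDiv_eq P Q hP0 hQ0 hPs hQs]
  have hterm : ∀ z, (1 / 2) * ((P z - Q z) ^ 2 / (P z + Q z))
      ≤ P z * Real.log (P z / ((P z + Q z) / 2)) + Q z * Real.log (Q z / ((P z + Q z) / 2)) := by
    intro z
    have h := kernel_lower (P z) (Q z) (hP0 z) (hQ0 z)
    have heq : (P z - Q z) ^ 2 / (2 * (P z + Q z))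
        = (1 / 2) * ((P z - Q z) ^ 2 / (P z + Q z)) := by
      rw [div_mul_eq_div_div_swap]
      ring
    linarith [heq ▸ h]
  have h := Summable.tsum_le_tsum hterm ((summable_quad P Q hP0 hQ0 hPs hQs).mul_left (1/2))
    ((summable_kl1 P Q hP0 hQ0 hPs hQs).add (summable_kl2 P Q hP0 hQ0 hPs hQs))
  rw [tsum_mul_left] at h
  linarith

include hP0 hQ0 hPs hQs in
lemma tsum_abs_le_sqrt (htot : ∑' z, (P z + Q z) ≤ 2) :
    ∑' z, |P z - Q z| ≤ Real.sqrt (8 * jsDiv P Q) := by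
  set G := ∑' z, (P z - Q z) ^ 2 / (P z + Q z) with hG
  have hGnn : 0 ≤ G :=
    tsum_nonneg fun z => div_nonneg (sq_nonneg _) (add_nonneg (hP0 z) (hQ0 z))
  have hGs := summable_quad P Q hP0 hQ0 hPs hQs
  have hHs : Summable (fun z => P z + Q z) := hPs.add hQs
  have hmain : ∑' z, |P z - Q z| ≤ Real.sqrt (2 * G) := by
    apply Summable.tsum_le_of_sum_le ((hPs.sub hQs).abs)
    intro s
    have hCS : (∑ z ∈ s, |P z - Q z|) ^ 2
        ≤ (∑ z ∈ s, (P z - Q z) ^ 2 / (P z + Q z)) * (∑ z ∈ s, (P z + Q z)) := by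
      apply Finset.sum_sq_le_sum_mul_sum_of_sq_eq_mul s
        (fun z _ => div_nonneg (sq_nonneg _) (add_nonneg (hP0 z) (hQ0 z)))
        (fun z _ => add_nonneg (hP0 z) (hQ0 z))
      intro z _
      rw [sq_abs]
      rcases eq_or_lt_of_le (add_nonneg (hP0 z) (hQ0 z)) with h | h
      · have hp : P z = 0 := by linarith [hP0 z, hQ0 z]
        have hq : Q z = 0 := by linarith [hP0 z, hQ0 z]
        simp [hp, hq]
      · rw [div_mul_cancel₀ _ (ne_of_gt h)]
    have hs1 : ∑ z ∈ s, (P z - Q z) ^ 2 / (P z + Q z) ≤ G :=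
      Summable.sum_le_tsum s (fun z _ => div_nonneg (sq_nonneg _) (add_nonneg (hP0 z) (hQ0 z))) hGs
    have hs2 : ∑ z ∈ s, (P z + Q z) ≤ 2 :=
      le_trans (Summable.sum_le_tsum s (fun z _ => add_nonneg (hP0 z) (hQ0 z)) hHs) htot
    have hsq : (∑ z ∈ s, |P z - Q z|) ^ 2 ≤ 2 * G := by
      have h2 : (∑ z ∈ s, (P z - Q z) ^ 2 / (P z + Q z)) * (∑ z ∈ s, (P z + Q z)) ≤ G * 2 :=
        mul_le_mul hs1 hs2 (Finset.sum_nonneg fun z _ => add_nonneg (hP0 z) (hQ0 z)) hGnn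
      linarith
    have hnn : 0 ≤ ∑ z ∈ s, |P z - Q z| := Finset.sum_nonneg fun z _ => abs_nonneg _
    exact (Real.le_sqrt hnn (by linarith)).mpr hsq
  have hquad := quad_le_jsDiv P Q hP0 hQ0 hPs hQs
  calc ∑' z, |P z - Q z| ≤ Real.sqrt (2 * G) := hmain
    _ ≤ Real.sqrt (8 * jsDiv P Q) := Real.sqrt_le_sqrt (by linarith)
end


lemma fin_split {m : ℕ} (k : Fin (m + m)) :
    (∃ y : Fin m, k = Fin.castAdd m y) ∨ ∃ y : Fin m, k = Fin.natAdd m y := by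
  rcases lt_or_ge (k : ℕ) m with h | h
  · exact Or.inl ⟨⟨(k : ℕ), h⟩, Fin.ext rfl⟩
  · refine Or.inr ⟨⟨(k : ℕ) - m, by omega⟩, Fin.ext ?_⟩
    simp only [Fin.coe_natAdd]
    omega

theorem comp_js_bound {X : Type*} [Countable X] {m : ℕ} (hm : 2 ≤ m) (a : ℝ)
    (ha0 : 0 ≤ a) (ha1 : a < 1)
    (P Q : X × Fin (m + m) → ℝ) (hP : IsPMF P) (hQ : IsPMF Q)
    (hPz : ∀ (x : X) (y : Fin (m + m)), m ≤ (y : ℕ) → P (x, y) = 0)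
    (hQz : ∀ (x : X) (y : Fin (m + m)), m ≤ (y : ℕ) → Q (x, y) = 0) :
    jsDiv P Q ≤ (((m : ℝ) - 1) / (a + (1 - a) * ((m : ℝ) - 1))) *
      Real.sqrt (8 * jsDiv (corrupt P (compConfusion m a)) (corrupt Q (compConfusion m a))) := by
  obtain ⟨hP0, hPs, hPt⟩ := hP
  obtain ⟨hQ0, hQs, hQt⟩ := hQ
  have hmR : (2 : ℝ) ≤ (m : ℝ) := by exact_mod_cast hm
  have hm1 : (0 : ℝ) < (m : ℝ) - 1 := by linarith
  set den : ℝ := a + (1 - a) * ((m : ℝ) - 1) with hden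
  have hden0 : 0 < den := by nlinarith
  set κ : ℝ := ((m : ℝ) - 1) / den with hκ
  have hκ0 : 0 ≤ κ := div_nonneg (by linarith) (le_of_lt hden0)
  set c : ℝ := a / ((m : ℝ) - 1) with hc
  have hc0 : 0 ≤ c := div_nonneg ha0 (le_of_lt hm1)
  set Pt := corrupt P (compConfusion m a) with hPtdef
  set Qt := corrupt Q (compConfusion m a) with hQtdef
  -- formulas
  have hPcast := corrupt_castAdd (a := a) hm P hPz
  have hPnat := corrupt_natAdd (a := a) hm P hPz
  have hQcast := corrupt_castAdd (a := a) hm Q hQz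
  have hQnat := corrupt_natAdd (a := a) hm Q hQz
  -- nonnegativity of Pt, Qt
  have hPt0 : ∀ z, 0 ≤ Pt z := by
    rintro ⟨x, k⟩
    rcases fin_split k with ⟨y, rfl⟩ | ⟨y, rfl⟩
    · rw [hPtdef, hPcast]
      exact mul_nonneg (by linarith) (hP0 _)
    · rw [hPtdef, hPnat]
      refine mul_nonneg hc0 (sub_nonneg.mpr ?_)
      exact Finset.single_le_sum (f := fun j : Fin m => P (x, Fin.castAdd m j))
        (fun j _ => hP0 _) (Finset.mem_univ y)
  have hQt0 : ∀ z, 0 ≤ Qt z := by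
    rintro ⟨x, k⟩
    rcases fin_split k with ⟨y, rfl⟩ | ⟨y, rfl⟩
    · rw [hQtdef, hQcast]
      exact mul_nonneg (by linarith) (hQ0 _)
    · rw [hQtdef, hQnat]
      refine mul_nonneg hc0 (sub_nonneg.mpr ?_)
      exact Finset.single_le_sum (f := fun j : Fin m => Q (x, Fin.castAdd m j))
        (fun j _ => hQ0 _) (Finset.mem_univ y)
  -- mass conservation per x
  have hcm : c * ((m : ℝ) - 1) = a := div_mul_cancel₀ a (ne_of_gt hm1)
  have massP : ∀ x, ∑ k : Fin (m + m), Pt (x, k) = ∑ k : Fin (m + m), P (x, k) := by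
    intro x
    rw [Fin.sum_univ_add, Fin.sum_univ_add]
    have h1 : ∑ i : Fin m, Pt (x, Fin.castAdd m i)
        = (1 - a) * ∑ i : Fin m, P (x, Fin.castAdd m i) := by
      rw [Finset.mul_sum]; exact Finset.sum_congr rfl fun i _ => hPcast x i
    have h2 : ∑ i : Fin m, Pt (x, Fin.natAdd m i)
        = c * ((m : ℝ) * (∑ j : Fin m, P (x, Fin.castAdd m j))
            - ∑ j : Fin m, P (x, Fin.castAdd m j)) := by
      rw [Finset.sum_congr rfl fun i _ => hPnat x i, ← Finset.mul_sum, Finset.sum_sub_distrib]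
      simp only [Finset.sum_const, Finset.card_univ, Fintype.card_fin, nsmul_eq_mul]
      rw [hc]
    have h3 : ∑ i : Fin m, P (x, Fin.natAdd m i) = 0 :=
      Finset.sum_eq_zero fun i _ => hPz x _ (by simp [Fin.coe_natAdd])
    rw [h1, h2, h3, add_zero]
    linear_combination (∑ j : Fin m, P (x, Fin.castAdd m j)) * hcm
  have massQ : ∀ x, ∑ k : Fin (m + m), Qt (x, k) = ∑ k : Fin (m + m), Q (x, k) := by
    intro x
    rw [Fin.sum_univ_add, Fin.sum_univ_add]
    have h1 : ∑ i : Fin m, Qt (x, Fin.castAdd m i)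
        = (1 - a) * ∑ i : Fin m, Q (x, Fin.castAdd m i) := by
      rw [Finset.mul_sum]; exact Finset.sum_congr rfl fun i _ => hQcast x i
    have h2 : ∑ i : Fin m, Qt (x, Fin.natAdd m i)
        = c * ((m : ℝ) * (∑ j : Fin m, Q (x, Fin.castAdd m j))
            - ∑ j : Fin m, Q (x, Fin.castAdd m j)) := by
      rw [Finset.sum_congr rfl fun i _ => hQnat x i, ← Finset.mul_sum, Finset.sum_sub_distrib]
      simp only [Finset.sum_const, Finset.card_univ, Fintype.card_fin, nsmul_eq_mul]
      rw [hc]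
    have h3 : ∑ i : Fin m, Q (x, Fin.natAdd m i) = 0 :=
      Finset.sum_eq_zero fun i _ => hQz x _ (by simp [Fin.coe_natAdd])
    rw [h1, h2, h3, add_zero]
    linear_combination (∑ j : Fin m, Q (x, Fin.castAdd m j)) * hcm
  -- summability of slices
  have hsliceP : ∀ k : Fin (m + m), Summable (fun x => P (x, k)) := fun k =>
    hPs.comp_injective (fun x1 x2 h => (Prod.ext_iff.1 h).1)
  have hsliceQ : ∀ k : Fin (m + m), Summable (fun x => Q (x, k)) := fun k =>
    hQs.comp_injective (fun x1 x2 h => (Prod.ext_iff.1 h).1)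
  have hsumP : Summable (fun x => ∑ k : Fin (m + m), P (x, k)) :=
    summable_sum fun k _ => hsliceP k
  have hsumQ : Summable (fun x => ∑ k : Fin (m + m), Q (x, k)) :=
    summable_sum fun k _ => hsliceQ k
  have hPts : Summable Pt := by
    rw [summable_prod_of_nonneg (fun z => hPt0 z)]
    refine ⟨fun x => Summable.of_finite, ?_⟩
    have : (fun x => ∑' k : Fin (m + m), Pt (x, k)) = fun x => ∑ k : Fin (m + m), P (x, k) := by
      funext x; rw [tsum_fintype]; exact massP x
    rw [this]; exact hsumP
  have hQts : Summable Qt := by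
    rw [summable_prod_of_nonneg (fun z => hQt0 z)]
    refine ⟨fun x => Summable.of_finite, ?_⟩
    have : (fun x => ∑' k : Fin (m + m), Qt (x, k)) = fun x => ∑ k : Fin (m + m), Q (x, k) := by
      funext x; rw [tsum_fintype]; exact massQ x
    rw [this]; exact hsumQ
  -- total mass of Pt, Qt
  have htotP : ∑' z, Pt z = 1 := by
    rw [Summable.tsum_prod' hPts (fun _ => Summable.of_finite)]
    calc ∑' x, ∑' k, Pt (x, k) = ∑' x, ∑ k : Fin (m + m), P (x, k) := by
          congr 1; funext x; rw [tsum_fintype]; exact massP x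
      _ = ∑' x, ∑' k, P (x, k) := by congr 1; funext x; rw [tsum_fintype]
      _ = ∑' z, P z := (Summable.tsum_prod' hPs (fun _ => Summable.of_finite)).symm
      _ = 1 := hPt
  have htotQ : ∑' z, Qt z = 1 := by
    rw [Summable.tsum_prod' hQts (fun _ => Summable.of_finite)]
    calc ∑' x, ∑' k, Qt (x, k) = ∑' x, ∑ k : Fin (m + m), Q (x, k) := by
          congr 1; funext x; rw [tsum_fintype]; exact massQ x
      _ = ∑' x, ∑' k, Q (x, k) := by congr 1; funext x; rw [tsum_fintype]
      _ = ∑' z, Q z := (Summable.tsum_prod' hQs (fun _ => Summable.of_finite)).symm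
      _ = 1 := hQt
  have htot : ∑' z, (Pt z + Qt z) ≤ 2 := by
    rw [Summable.tsum_add hPts hQts, htotP, htotQ]; norm_num
  -- the l1 comparison
  set T : X → ℝ := fun x => ∑ y : Fin m, |P (x, Fin.castAdd m y) - Q (x, Fin.castAdd m y)| with hT
  set A : X → ℝ := fun x => ∑ y : Fin m,
    |(∑ j : Fin m, (P (x, Fin.castAdd m j) - Q (x, Fin.castAdd m j)))
      - (P (x, Fin.castAdd m y) - Q (x, Fin.castAdd m y))| with hAdef
  have hTfull : ∀ x, ∑ k : Fin (m + m), |P (x, k) - Q (x, k)| = T x := by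
    intro x
    rw [Fin.sum_univ_add]
    have h2 : ∑ i : Fin m, |P (x, Fin.natAdd m i) - Q (x, Fin.natAdd m i)| = 0 :=
      Finset.sum_eq_zero fun i _ => by
        rw [hPz x _ (by simp [Fin.coe_natAdd]), hQz x _ (by simp [Fin.coe_natAdd])]; simp
    rw [h2, add_zero]
  have hTtfull : ∀ x, ∑ k : Fin (m + m), |Pt (x, k) - Qt (x, k)|
      = (1 - a) * T x + c * A x := by
    intro x
    rw [Fin.sum_univ_add]
    have h1 : ∑ i : Fin m, |Pt (x, Fin.castAdd m i) - Qt (x, Fin.castAdd m i)|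
        = (1 - a) * T x := by
      rw [hT, Finset.mul_sum]
      refine Finset.sum_congr rfl fun i _ => ?_
      rw [hPtdef, hQtdef, hPcast x i, hQcast x i, ← mul_sub, abs_mul,
        abs_of_nonneg (by linarith : (0:ℝ) ≤ 1 - a)]
    have h2 : ∑ i : Fin m, |Pt (x, Fin.natAdd m i) - Qt (x, Fin.natAdd m i)| = c * A x := by
      rw [hAdef, Finset.mul_sum]
      refine Finset.sum_congr rfl fun i _ => ?_
      rw [hPtdef, hQtdef, hPnat x i, hQnat x i, ← mul_sub, abs_mul, abs_of_nonneg hc0]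
      congr 2
      rw [Finset.sum_sub_distrib]
      ring
    rw [h1, h2]
  have hpoint : ∀ x, T x ≤ 2 * κ * ((1 - a) * T x + c * A x) := by
    intro x
    have hkey := key_ineq hm (fun y => P (x, Fin.castAdd m y) - Q (x, Fin.castAdd m y))
    have hTA : T x ≤ 2 * A x := hkey
    have hT0 : 0 ≤ T x := Finset.sum_nonneg fun y _ => abs_nonneg _
    have hA0 : 0 ≤ A x := Finset.sum_nonneg fun y _ => abs_nonneg _
    have expand : 2 * κ * ((1 - a) * T x + c * A x)
        = (2 * ((m:ℝ) - 1) * (1 - a) * T x + 2 * a * A x) / den := by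
      rw [hκ, hc]
      field_simp
    rw [expand, le_div_iff₀ hden0, hden]
    nlinarith [mul_nonneg ha0 (by linarith : 0 ≤ 2 * A x - T x),
      mul_nonneg (mul_nonneg (by linarith : (0:ℝ) ≤ 1 - a)
        (by linarith : (0:ℝ) ≤ (m:ℝ) - 1)) hT0]
  -- summability of the per-x row sums
  have hsliceD : ∀ k : Fin (m + m), Summable (fun x => |P (x, k) - Q (x, k)|) := fun k =>
    ((hsliceP k).sub (hsliceQ k)).abs
  have hsumT : Summable (fun x => ∑ k : Fin (m + m), |P (x, k) - Q (x, k)|) :=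
    summable_sum fun k _ => hsliceD k
  have hslicePt : ∀ k : Fin (m + m), Summable (fun x => Pt (x, k)) := fun k =>
    hPts.comp_injective (fun x1 x2 h => (Prod.ext_iff.1 h).1)
  have hsliceQt : ∀ k : Fin (m + m), Summable (fun x => Qt (x, k)) := fun k =>
    hQts.comp_injective (fun x1 x2 h => (Prod.ext_iff.1 h).1)
  have hsumTt : Summable (fun x => ∑ k : Fin (m + m), |Pt (x, k) - Qt (x, k)|) :=
    summable_sum fun k _ => ((hslicePt k).sub (hsliceQt k)).abs
  -- D and Dt
  have hD : ∑' z, |P z - Q z| = ∑' x, T x := by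
    rw [Summable.tsum_prod' (hPs.sub hQs).abs (fun _ => Summable.of_finite)]
    congr 1; funext x; rw [tsum_fintype]; exact hTfull x
  have hDt : ∑' z, |Pt z - Qt z| = ∑' x, ((1 - a) * T x + c * A x) := by
    rw [Summable.tsum_prod' (hPts.sub hQts).abs (fun _ => Summable.of_finite)]
    congr 1; funext x; rw [tsum_fintype]; exact hTtfull x
  have hsumT' : Summable T := by
    have : T = fun x => ∑ k : Fin (m + m), |P (x, k) - Q (x, k)| := by
      funext x; exact (hTfull x).symm
    rw [this]; exact hsumT
  have hsumTt' : Summable (fun x => (1 - a) * T x + c * A x) := by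
    have : (fun x => (1 - a) * T x + c * A x)
        = fun x => ∑ k : Fin (m + m), |Pt (x, k) - Qt (x, k)| := by
      funext x; exact (hTtfull x).symm
    rw [this]; exact hsumTt
  have hDle : ∑' z, |P z - Q z| ≤ 2 * κ * ∑' z, |Pt z - Qt z| := by
    rw [hD, hDt, ← tsum_mul_left]
    exact Summable.tsum_le_tsum hpoint hsumT' (hsumTt'.mul_left _)
  -- final chain
  have hjs1 : jsDiv P Q ≤ (1 / 2) * ∑' z, |P z - Q z| := jsDiv_le_half P Q hP0 hQ0 hPs hQs
  have hjs2 : ∑' z, |Pt z - Qt z| ≤ Real.sqrt (8 * jsDiv Pt Qt) :=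
    tsum_abs_le_sqrt Pt Qt hPt0 hQt0 hPts hQts htot
  calc jsDiv P Q ≤ (1 / 2) * ∑' z, |P z - Q z| := hjs1
    _ ≤ κ * ∑' z, |Pt z - Qt z| := by linarith
    _ ≤ κ * Real.sqrt (8 * jsDiv Pt Qt) := mul_le_mul_of_nonneg_left hjs2 hκ0
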